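/- Let D be an associative unital ℂ-algebra containing elements p, E, F with E·F = F·E = 1, p·E = E·(p+1), and p·F = F·(p−1), and let x₁, x₂ ∈ ℂ. Then the Heisenberg-magnet Lax matrix T(z) = [[z−p, −(p−x₁)(p−x₂)·E],[F, z+p+1−x₁−x₂]] (a 2×2 matrix with entries in D[z]) satisfies the rational RTT relation R_rat(z−w)·T₁(z)·T₂(w) = T₂(w)·T₁(z)·R_rat(z−w), an identity of 4×4 matrices with entries in D[z,w]. -/
import Mathlib


open Matrix Polynomial

noncomputable section

/-- The permutation operator `P = ∑_{i,j} E_{ij} ⊗ E_{ji}` for `n = 2`. -/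
def permOp2 (R : Type*) [Ring R] : Matrix (Fin 2 × Fin 2) (Fin 2 × Fin 2) R :=
  Matrix.of fun x y => if x.1 = y.2 ∧ x.2 = y.1 then 1 else 0

/-- The rational R-matrix `R_rat(u) = u·Id₄ + P`. -/
def Rrat2 {R : Type*} [Ring R] (u : R) : Matrix (Fin 2 × Fin 2) (Fin 2 × Fin 2) R :=
  u • (1 : Matrix (Fin 2 × Fin 2) (Fin 2 × Fin 2) R) + permOp2 R

/-- `X₁ = X ⊗ Id₂`. -/
def kron1 {R : Type*} [Ring R] (X : Matrix (Fin 2) (Fin 2) R) :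
    Matrix (Fin 2 × Fin 2) (Fin 2 × Fin 2) R :=
  Matrix.of fun x y => X x.1 y.1 * (if x.2 = y.2 then 1 else 0)

/-- `X₂ = Id₂ ⊗ X`. -/
def kron2 {R : Type*} [Ring R] (X : Matrix (Fin 2) (Fin 2) R) :
    Matrix (Fin 2 × Fin 2) (Fin 2 × Fin 2) R :=
  Matrix.of fun x y => (if x.1 = y.1 then 1 else 0) * X x.2 y.2

/-- The embedding `D → D[z,w] = (D[z])[w]`. -/
def iota {D : Type*} [Ring D] : D →+* Polynomial (Polynomial D) :=
  (Polynomial.C : Polynomial D →+* Polynomial (Polynomial D)).comp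
    (Polynomial.C : D →+* Polynomial D)

set_option maxHeartbeats 4000000 in
/-- Generic form of the RTT relation: in any ring `R` containing central elements
`z, w, a, b` and elements `P, e, f` satisfying the difference-operator relations,
the Lax matrix satisfies the rational RTT relation. -/
lemma rtt_generic {R : Type*} [Ring R] (z w a b P e f : R)
    (hz : ∀ x, z * x = x * z) (hw : ∀ x, w * x = x * w)
    (ha : ∀ x, a * x = x * a) (hb : ∀ x, b * x = x * b)
    (hef : e * f = 1) (hfe : f * e = 1)
    (hpe : P * e = e * (P + 1)) (hpf : P * f = f * (P - 1)) :
    Rrat2 (z - w) * kron1 !![z - P, -((P - a) * (P - b) * e); f, z + P + 1 - a - b]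
        * kron2 !![w - P, -((P - a) * (P - b) * e); f, w + P + 1 - a - b]
    = kron2 !![w - P, -((P - a) * (P - b) * e); f, w + P + 1 - a - b]
        * kron1 !![z - P, -((P - a) * (P - b) * e); f, z + P + 1 - a - b]
        * Rrat2 (z - w) := by
  have chain : ∀ x y : R, x * y = y * x → ∀ t, x * (y * t) = y * (x * t) :=
    fun x y h t => by rw [← mul_assoc, h, mul_assoc]
  have eP : e * P = P * e - e := by rw [hpe]; noncomm_ring
  have fP : f * P = P * f + f := by rw [hpf]; noncomm_ring
  have eP' : ∀ t, e * (P * t) = P * (e * t) - e * t :=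
    fun t => by rw [← mul_assoc, eP, sub_mul, mul_assoc]
  have fP' : ∀ t, f * (P * t) = P * (f * t) + f * t :=
    fun t => by rw [← mul_assoc, fP, add_mul, mul_assoc]
  have ef' : ∀ t, e * (f * t) = t := fun t => by rw [← mul_assoc, hef, one_mul]
  have fe' : ∀ t, f * (e * t) = t := fun t => by rw [← mul_assoc, hfe, one_mul]
  have wz : w * z = z * w := (hz w).symm
  have Pz : P * z = z * P := (hz P).symm
  have Pw : P * w = w * P := (hw P).symm
  have Pa : P * a = a * P := (ha P).symm
  have Pb : P * b = b * P := (hb P).symm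
  have ez : e * z = z * e := (hz e).symm
  have ew : e * w = w * e := (hw e).symm
  have ea : e * a = a * e := (ha e).symm
  have eb : e * b = b * e := (hb e).symm
  have fz : f * z = z * f := (hz f).symm
  have fw : f * w = w * f := (hw f).symm
  have fa : f * a = a * f := (ha f).symm
  have fb : f * b = b * f := (hb f).symm
  have az : a * z = z * a := ha z
  have aw : a * w = w * a := ha w
  have bz : b * z = z * b := hb z
  have bw : b * w = w * b := hb w
  have ba : b * a = a * b := hb a
  ext ⟨i, j⟩ ⟨k, l⟩
  fin_cases i <;> fin_cases j <;> fin_cases k <;> fin_cases l <;>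
    simp [Rrat2, permOp2, kron1, kron2, Matrix.mul_apply, Fintype.sum_prod_type,
      Fin.sum_univ_succ, Matrix.one_apply, Prod.ext_iff] <;>
    (try
      simp only [mul_add, add_mul, mul_sub, sub_mul, neg_mul, mul_neg, mul_one, one_mul,
        mul_assoc, chain w z wz, chain P z Pz, chain P w Pw, chain P a Pa, chain P b Pb,
        chain e z ez, chain e w ew, chain e a ea, chain e b eb,
        chain f z fz, chain f w fw, chain f a fa, chain f b fb,
        chain a z az, chain a w aw, chain b z bz, chain b w bw, chain b a ba,
        wz, Pz, Pw, Pa, Pb, ez, ew, ea, eb, fz, fw, fa, fb, az, aw, bz, bw, ba,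
        eP', fP', eP, fP, ef', fe', hef, hfe]) <;>
    noncomm_ring

/-- The Heisenberg-magnet Lax matrix `T(z) = [[z−p, −(p−x₁)(p−x₂)·E],[F, z+p+1−x₁−x₂]]` satisfies the rational
RTT relation `R_rat(z−w)·T₁(z)·T₂(w) = T₂(w)·T₁(z)·R_rat(z−w)` over `D[z,w]`. -/
theorem heisenberg_lax_rtt (D : Type*) [Ring D] [Algebra ℂ D]
    (p E F : D) (hEF : E * F = 1) (hFE : F * E = 1)
    (hpE : p * E = E * (p + 1)) (hpF : p * F = F * (p - 1)) (x₁ x₂ : ℂ) :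
    let z : Polynomial (Polynomial D) := Polynomial.C Polynomial.X
    let w : Polynomial (Polynomial D) := Polynomial.X
    let T : Polynomial (Polynomial D) → Matrix (Fin 2) (Fin 2) (Polynomial (Polynomial D)) :=
      fun ζ =>
        !![ζ - iota p,
           -((iota p - algebraMap ℂ (Polynomial (Polynomial D)) x₁) *
             (iota p - algebraMap ℂ (Polynomial (Polynomial D)) x₂) * iota E);
           iota F,
           ζ + iota p + 1 - algebraMap ℂ (Polynomial (Polynomial D)) x₁ -
             algebraMap ℂ (Polynomial (Polynomial D)) x₂]
    Rrat2 (z - w) * kron1 (T z) * kron2 (T w) =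
      kron2 (T w) * kron1 (T z) * Rrat2 (z - w) := by
  intro z w T
  have hz : ∀ q : Polynomial (Polynomial D), z * q = q * z := by
    intro q
    induction q using Polynomial.induction_on' with
    | add p q hp hq => rw [mul_add, add_mul, hp, hq]
    | monomial n c =>
        show (C X : Polynomial (Polynomial D)) * _ = _
        rw [← Polynomial.C_mul_X_pow_eq_monomial, ← mul_assoc, ← Polynomial.C_mul,
          Polynomial.X_mul, Polynomial.C_mul, mul_assoc, mul_assoc, Polynomial.X_pow_mul]
  have hw : ∀ q : Polynomial (Polynomial D), w * q = q * w := fun q => Polynomial.X_mul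
  have ha : ∀ q : Polynomial (Polynomial D),
      algebraMap ℂ (Polynomial (Polynomial D)) x₁ * q =
        q * algebraMap ℂ (Polynomial (Polynomial D)) x₁ := fun q => Algebra.commutes x₁ q
  have hb : ∀ q : Polynomial (Polynomial D),
      algebraMap ℂ (Polynomial (Polynomial D)) x₂ * q =
        q * algebraMap ℂ (Polynomial (Polynomial D)) x₂ := fun q => Algebra.commutes x₂ q
  have hef : iota E * iota F = 1 := by rw [← _root_.map_mul, hEF, _root_.map_one]
  have hfe : iota F * iota E = 1 := by rw [← _root_.map_mul, hFE, _root_.map_one]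
  have hpe : iota p * iota E = iota E * (iota p + 1) := by
    rw [← _root_.map_mul, hpE, _root_.map_mul, _root_.map_add, _root_.map_one]
  have hpf : iota p * iota F = iota F * (iota p - 1) := by
    rw [← _root_.map_mul, hpF, _root_.map_mul, _root_.map_sub, _root_.map_one]
  exact rtt_generic z w (algebraMap ℂ (Polynomial (Polynomial D)) x₁)
    (algebraMap ℂ (Polynomial (Polynomial D)) x₂) (iota p) (iota E) (iota F)
    hz hw ha hb hef hfe hpe hpf
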